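/- Suppose the solution ξ of ξ'(t) = F(t, ξ(t)) admits a C¹ function V : ℝ^d → ℝ with a₁‖ξ‖^r ≤ V(ξ) ≤ a₂‖ξ‖^r for all ξ (where a₁, a₂ > 0 and r > 1), and DV(ξ)F(t,ξ) ≤ α(t)V(ξ) for all t ≥ 0 and ξ ≠ 0, where α is locally integrable. Then ‖ξ(t)‖ ≤ (a₂/a₁)^{1/r} ‖ξ(0)‖ e^{(1/r)∫_0^t α(s)ds} for all t ≥ 0. -/

import Mathlib

open MeasureTheory Filter Set

/-- Grönwall inequality with merely locally integrable coefficient, for a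
nonnegative everywhere-differentiable function. -/
lemma gronwall_L1 (W W' α : ℝ → ℝ) (T : ℝ) (hT : 0 ≤ T)
    (hW : ∀ t, 0 ≤ t → HasDerivAt W (W' t) t)
    (hWnn : ∀ t, 0 ≤ W t)
    (hα : IntervalIntegrable α volume 0 T)
    (hineq : ∀ t, 0 ≤ t → W' t ≤ α t * W t) :
    W T ≤ W 0 * Real.exp (∫ s in (0:ℝ)..T, α s) := by
  set I : ℝ := ∫ s in (0:ℝ)..T, α s with hI
  have key : ∀ ε : ℝ, 0 < ε → W T ≤ W 0 * Real.exp (I + ε) := by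
    intro ε εpos
    set μ : Measure ℝ := volume.restrict (Icc (0:ℝ) T) with hμ
    have hint : Integrable α μ := by
      rw [hμ]
      exact (integrableOn_Icc_iff_integrableOn_Ioc).mpr hα.1
    obtain ⟨g, hαg, glsc, gint, gfin, gtot⟩ :=
      exists_lt_lowerSemicontinuous_integral_lt (μ := μ) α hint εpos
    set h : ℝ → ℝ := fun s => (g s).toReal with hh_def
    have hh : IntegrableOn h (Icc (0:ℝ) T) volume := gint
    have hii : ∀ a b, a ∈ Icc (0:ℝ) T → b ∈ Icc (0:ℝ) T →
        IntervalIntegrable h volume a b := by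
      intro a b ha hb
      apply IntegrableOn.intervalIntegrable
      apply hh.mono_set
      rw [← Set.uIcc_of_le hT]
      exact Set.uIcc_subset_uIcc (by rwa [Set.uIcc_of_le hT]) (by rwa [Set.uIcc_of_le hT])
    set A : ℝ → ℝ := fun t => ∫ s in (0:ℝ)..t, h s with hA_def
    have hAcont : ContinuousOn A (Icc (0:ℝ) T) := by
      have := intervalIntegral.continuousOn_primitive_interval (μ := volume) (a := 0) (b := T)
        (f := h) (by rwa [Set.uIcc_of_le hT])
      rwa [Set.uIcc_of_le hT] at this
    set f : ℝ → ℝ := fun t => W t * Real.exp (-(A t)) with hf_def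
    have hfc : ContinuousOn f (Icc (0:ℝ) T) := by
      apply ContinuousOn.mul
      · exact fun t ht => (hW t ht.1).continuousAt.continuousWithinAt
      · exact Real.continuous_exp.comp_continuousOn hAcont.neg
    -- the fencing argument
    have bound : ∀ x ∈ Ico (0:ℝ) T, ∀ r : ℝ, (0:ℝ) < r →
        ∃ᶠ z in nhdsWithin x (Set.Ioi x), slope f x z < r := by
      intro x hx r hr
      set c : ℝ := α x with hc
      obtain ⟨δ, δpos, hδ⟩ := Metric.eventually_nhds_iff.mp (glsc x _ (hαg x))
      -- auxiliary comparison function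
      have h1 : HasDerivAt (fun y : ℝ => -(c * (y - x))) (-c) x := by
        simpa using (((hasDerivAt_id x).sub_const x).const_mul c).fun_neg
      have h2 := h1.exp
      have h3 := (hW x hx.1).mul h2
      have h4 := h3.mul_const (Real.exp (-(A x)))
      set φ : ℝ → ℝ := fun y => W y * Real.exp (-(c * (y - x))) * Real.exp (-(A x)) with hφ_def
      have hφval : (W' x * Real.exp (-(c * (x - x))) +
          W x * (Real.exp (-(c * (x - x))) * -c)) * Real.exp (-(A x))
          = (W' x - c * W x) * Real.exp (-(A x)) := by
        simp [sub_self, mul_comm]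
        ring
      rw [hφval] at h4
      have hφ'le : (W' x - c * W x) * Real.exp (-(A x)) < r := by
        have h5 : W' x - c * W x ≤ 0 := by
          have := hineq x hx.1
          linarith
        have : (W' x - c * W x) * Real.exp (-(A x)) ≤ 0 :=
          mul_nonpos_of_nonpos_of_nonneg h5 (Real.exp_nonneg _)
        linarith
      have hslope : Tendsto (slope φ x) (nhdsWithin x (Set.Ioi x))
          (nhds ((W' x - c * W x) * Real.exp (-(A x)))) :=
        (hasDerivAt_iff_tendsto_slope.mp h4).mono_left
          (nhdsWithin_mono x (fun z hz => ne_of_gt hz))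
      have hev1 : ∀ᶠ z in nhdsWithin x (Set.Ioi x), slope φ x z < r :=
        hslope.eventually_lt_const hφ'le
      have hev2 : Set.Ioo x (min T (x + δ)) ∈ nhdsWithin x (Set.Ioi x) :=
        Ioo_mem_nhdsGT_of_mem ⟨le_refl x, lt_min hx.2 (lt_add_of_pos_right _ δpos)⟩
      apply Filter.Eventually.frequently
      filter_upwards [hev1, hev2] with z hz1 hz2
      obtain ⟨hxz, hzm⟩ := hz2
      have hzT : z < T := lt_of_lt_of_le hzm (min_le_left _ _)
      have hzδ : z < x + δ := lt_of_lt_of_le hzm (min_le_right _ _)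
      have hxIcc : x ∈ Icc (0:ℝ) T := ⟨hx.1, le_of_lt hx.2⟩
      have hzIcc : z ∈ Icc (0:ℝ) T := ⟨le_trans hx.1 hxz.le, hzT.le⟩
      -- A z - A x ≥ c (z - x)
      have hadd : A x + ∫ s in x..z, h s = A z :=
        intervalIntegral.integral_add_adjacent_intervals
          (hii 0 x (Set.left_mem_Icc.mpr hT) hxIcc) (hii x z hxIcc hzIcc)
      have hsub : Icc x z ⊆ Icc (0:ℝ) T := Set.Icc_subset_Icc hx.1 hzT.le
      have gfin' : ∀ᵐ s ∂(volume.restrict (Icc x z)), g s < ⊤ := by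
        apply ae_restrict_of_ae_restrict_of_subset hsub
        exact gfin
      have hae' : (fun _ : ℝ => c) ≤ᵐ[volume.restrict (Icc x z)] h := by
        filter_upwards [gfin', ae_restrict_mem measurableSet_Icc] with s hs hsmem
        have hdist : dist s x < δ := by
          rw [Real.dist_eq, abs_lt]
          constructor <;> [linarith [hsmem.1]; linarith [hsmem.2]]
        have hgs : (c : EReal) < g s := hδ hdist
        have := EReal.toReal_le_toReal hgs.le (by simp) hs.ne
        simpa using this
      have hmono : c * (z - x) ≤ ∫ s in x..z, h s := by
        have hconst : ∫ s in x..z, (fun _ => c) s = c * (z - x) := by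
          simp [intervalIntegral.integral_const, mul_comm]
        rw [← hconst]
        exact intervalIntegral.integral_mono_ae_restrict hxz.le
          intervalIntegrable_const (hii x z hxIcc hzIcc) hae'
      have hAz : A x + c * (z - x) ≤ A z := by linarith
      -- f z ≤ φ z
      have hfφ : f z ≤ φ z := by
        have : Real.exp (-(A z)) ≤ Real.exp (-(c * (z - x))) * Real.exp (-(A x)) := by
          rw [← Real.exp_add]
          apply Real.exp_le_exp.mpr
          linarith
        calc W z * Real.exp (-(A z))
            ≤ W z * (Real.exp (-(c * (z - x))) * Real.exp (-(A x))) :=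
              mul_le_mul_of_nonneg_left this (hWnn z)
          _ = φ z := by rw [hφ_def]; ring
      have hfφx : φ x = f x := by
        rw [hφ_def, hf_def]
        simp
      have hle : slope f x z ≤ slope φ x z := by
        rw [slope_def_field, slope_def_field]
        apply (div_le_div_iff_of_pos_right (sub_pos.mpr hxz)).mpr
        have := hfφx
        linarith
      exact lt_of_le_of_lt hle hz1
    have fence :=
      image_le_of_liminf_slope_right_le_deriv_boundary (f := f) (a := 0) (b := T)
        (B := fun _ => f 0) (B' := fun _ => 0) hfc (le_refl (f 0))
        continuousOn_const (fun x _ => hasDerivWithinAt_const x _ (f 0))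
        (fun x hx r hr => bound x hx r hr) (Set.right_mem_Icc.mpr hT)
    -- from `f T ≤ f 0` conclude
    have hA0 : A 0 = 0 := intervalIntegral.integral_same
    have hf0 : f 0 = W 0 := by rw [hf_def]; simp [hA0]
    have hWT : W T ≤ W 0 * Real.exp (A T) := by
      have h6 : W T * Real.exp (-(A T)) ≤ W 0 := by rw [← hf0]; exact fence
      have h7 := mul_le_mul_of_nonneg_right h6 (Real.exp_nonneg (A T))
      rw [mul_assoc, ← Real.exp_add, neg_add_cancel, Real.exp_zero, mul_one] at h7
      exact h7
    -- A T ≤ I + ε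
    have hAT : A T ≤ I + ε := by
      have e1 : A T = ∫ s, h s ∂μ := by
        show (∫ s in (0:ℝ)..T, h s) = ∫ s, h s ∂μ
        rw [intervalIntegral.integral_of_le hT, hμ, ← integral_Icc_eq_integral_Ioc]
      have e2 : (∫ s, α s ∂μ) = I := by
        rw [hI, intervalIntegral.integral_of_le hT, hμ, ← integral_Icc_eq_integral_Ioc]
      have := gtot
      rw [e2] at this
      rw [e1]
      linarith
    calc W T ≤ W 0 * Real.exp (A T) := hWT
      _ ≤ W 0 * Real.exp (I + ε) :=
        mul_le_mul_of_nonneg_left (Real.exp_le_exp.mpr hAT) (hWnn 0)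
  -- pass to the limit ε → 0⁺
  have hlim : Tendsto (fun ε : ℝ => W 0 * Real.exp (I + ε)) (nhdsWithin 0 (Set.Ioi 0))
      (nhds (W 0 * Real.exp (I + 0))) := by
    apply Tendsto.mono_left _ nhdsWithin_le_nhds
    exact (Continuous.mul continuous_const
      (Real.continuous_exp.comp (continuous_const.add continuous_id))).tendsto 0
  rw [add_zero] at hlim
  refine ge_of_tendsto hlim ?_
  filter_upwards [self_mem_nhdsWithin] with ε hε
  exact key ε hε

theorem lyapunov_growth_M1_zero {d : ℕ}
    (F : ℝ → EuclideanSpace ℝ (Fin d) → EuclideanSpace ℝ (Fin d))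
    (ξ : ℝ → EuclideanSpace ℝ (Fin d))
    (hξ : ∀ t, 0 ≤ t → HasDerivAt ξ (F t (ξ t)) t)
    (V : EuclideanSpace ℝ (Fin d) → ℝ) (hV : ContDiff ℝ 1 V)
    (a₁ a₂ r : ℝ) (ha₁ : 0 < a₁) (ha₂ : 0 < a₂) (hr : 1 < r)
    (hsand : ∀ x, a₁ * ‖x‖ ^ r ≤ V x ∧ V x ≤ a₂ * ‖x‖ ^ r)
    (α : ℝ → ℝ) (hα : ∀ t, IntervalIntegrable α volume 0 t)
    (hLyap : ∀ t, 0 ≤ t → ∀ x, x ≠ 0 → fderiv ℝ V x (F t x) ≤ α t * V x) :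
    ∀ t, 0 ≤ t →
      ‖ξ t‖ ≤ (a₂ / a₁) ^ (1 / r) * ‖ξ 0‖ *
        Real.exp ((1 / r) * ∫ s in (0:ℝ)..t, α s) := by
  intro t ht
  have hr0 : (0:ℝ) < r := lt_trans one_pos hr
  have hrne : r ≠ 0 := ne_of_gt hr0
  set W : ℝ → ℝ := fun s => V (ξ s) with hW_def
  set W' : ℝ → ℝ := fun s => fderiv ℝ V (ξ s) (F s (ξ s)) with hW'_def
  have hWd : ∀ s, 0 ≤ s → HasDerivAt W (W' s) s := fun s hs =>
    ((hV.differentiable one_ne_zero).differentiableAt.hasFDerivAt).comp_hasDerivAt s (hξ s hs)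
  have hV0 : V 0 = 0 := by
    have h1 := (hsand 0).1
    have h2 := (hsand 0).2
    rw [norm_zero, Real.zero_rpow hrne] at h1 h2
    linarith
  have hWnn : ∀ s, 0 ≤ W s := fun s =>
    le_trans (mul_nonneg ha₁.le (Real.rpow_nonneg (norm_nonneg _) r)) (hsand (ξ s)).1
  have hineq : ∀ s, 0 ≤ s → W' s ≤ α s * W s := by
    intro s hs
    by_cases hz : ξ s = 0
    · have hWs : W s = 0 := by rw [hW_def]; simp [hz, hV0]
      have hmin : IsLocalMin W s :=
        Filter.Eventually.of_forall (fun y => hWs ▸ hWnn y)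
      have : W' s = 0 := hmin.hasDerivAt_eq_zero (hWd s hs)
      rw [this, hWs, mul_zero]
    · exact hLyap s hs _ hz
  have key : W t ≤ W 0 * Real.exp (∫ s in (0:ℝ)..t, α s) :=
    gronwall_L1 W W' α t ht hWd hWnn (hα t) hineq
  set E : ℝ := Real.exp (∫ s in (0:ℝ)..t, α s) with hE
  have hEpos : 0 < E := Real.exp_pos _
  have chain : a₁ * ‖ξ t‖ ^ r ≤ a₂ * ‖ξ 0‖ ^ r * E := by
    calc a₁ * ‖ξ t‖ ^ r ≤ W t := (hsand (ξ t)).1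
      _ ≤ W 0 * E := key
      _ ≤ a₂ * ‖ξ 0‖ ^ r * E :=
        mul_le_mul_of_nonneg_right (hsand (ξ 0)).2 hEpos.le
  have hstep : ‖ξ t‖ ^ r ≤ (a₂ / a₁) * ‖ξ 0‖ ^ r * E := by
    rw [div_mul_eq_mul_div, div_mul_eq_mul_div, le_div_iff₀ ha₁]
    calc ‖ξ t‖ ^ r * a₁ = a₁ * ‖ξ t‖ ^ r := mul_comm _ _
      _ ≤ a₂ * ‖ξ 0‖ ^ r * E := chain
  have hbase : (0:ℝ) ≤ (a₂ / a₁) * ‖ξ 0‖ ^ r * E :=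
    mul_nonneg (mul_nonneg (div_nonneg ha₂.le ha₁.le)
      (Real.rpow_nonneg (norm_nonneg _) r)) hEpos.le
  have hfin : ‖ξ t‖ ≤ ((a₂ / a₁) * ‖ξ 0‖ ^ r * E) ^ (r⁻¹) := by
    have h1 : ‖ξ t‖ = (‖ξ t‖ ^ r) ^ (r⁻¹) :=
      (Real.rpow_rpow_inv (norm_nonneg _) hrne).symm
    rw [h1]
    exact Real.rpow_le_rpow (Real.rpow_nonneg (norm_nonneg _) r) hstep
      (inv_nonneg.mpr hr0.le)
  have hexpand : ((a₂ / a₁) * ‖ξ 0‖ ^ r * E) ^ (r⁻¹)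
      = (a₂ / a₁) ^ (1 / r) * ‖ξ 0‖ * Real.exp ((1 / r) * ∫ s in (0:ℝ)..t, α s) := by
    rw [Real.mul_rpow (mul_nonneg (div_nonneg ha₂.le ha₁.le)
        (Real.rpow_nonneg (norm_nonneg _) r)) hEpos.le,
      Real.mul_rpow (div_nonneg ha₂.le ha₁.le) (Real.rpow_nonneg (norm_nonneg _) r),
      Real.rpow_rpow_inv (norm_nonneg _) hrne, hE, ← Real.exp_mul, one_div,
      mul_comm _ (r⁻¹)]
  rw [← hexpand]
  exact hfin
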